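/- Let ⊗ be the tensor product of a closed symmetric monoidal structure on the category Graph of reflexive graphs, and for a, a' ∈ {s, t} write (a,a') for the vertex of I_1 ⊗ I_1 that is the image of the morphism (a,a') : I_0 → I_1 ⊗ I_1. Then the vertex (s,s) is adjacent to (t,t) if and only if (s,t) is adjacent to (t,s); consequently I_1 ⊗ I_1 is isomorphic either to the 4-cycle C_4 (with the labelled vertices in the cyclic order (s,s), (s,t), (t,t), (t,s)) or to the complete graph K_4 on the four labelled vertices. -/

import Mathlib

open CategoryTheory MonoidalCategory

/-- The category of (reflexive) graphs: an object is a set of vertices with an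
irreflexive symmetric adjacency relation. -/
structure GraphCat : Type 1 where
  V : Type
  adj : V → V → Prop
  symm : ∀ {v w : V}, adj v w → adj w v
  loopless : ∀ v : V, ¬ adj v v

namespace GraphCat

/-- A graph map: whenever `v ∼ w`, either `f v = f w` or `f v ∼ f w`. -/
structure Hom (X Y : GraphCat) where
  toFun : X.V → Y.V
  map_adj : ∀ {v w : X.V}, X.adj v w → toFun v = toFun w ∨ Y.adj (toFun v) (toFun w)

theorem Hom.ext' {X Y : GraphCat} {f g : Hom X Y} (h : f.toFun = g.toFun) : f = g := by
  cases f; cases g; cases h; rfl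

instance : Category GraphCat where
  Hom := Hom
  id X := ⟨fun v => v, fun h => Or.inr h⟩
  comp f g := ⟨fun v => g.toFun (f.toFun v), fun {v w} h => by
    rcases f.map_adj h with h' | h'
    · exact Or.inl (congrArg g.toFun h')
    · exact g.map_adj h'⟩
  id_comp f := Hom.ext' rfl
  comp_id f := Hom.ext' rfl
  assoc f g h := Hom.ext' rfl

/-- The one-vertex graph `I₀`. -/
def I0 : GraphCat := ⟨PUnit, fun _ _ => False, fun h => h, fun _ h => h⟩

/-- The graph `I₁` with two vertices `s = false` and `t = true` joined by an edge. -/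
def I1 : GraphCat := ⟨Bool, fun v w => v ≠ w, Ne.symm, fun _ h => h rfl⟩

/-- The vertex inclusions `s, t : I₀ ⟶ I₁` (`s` for `false`, `t` for `true`). -/
def vert (b : Bool) : I0 ⟶ I1 := ⟨fun _ => b, fun {_ _} h => h.elim⟩

section Labels

variable [MonoidalCategory GraphCat]

/-- Given a monoidal structure on graphs with unit `I₀`, the label morphism
`(a, a') : I₀ ⟶ I₁ ⊗ I₁` for `a, a' ∈ {s, t}` (encoded as booleans, `s = false`,
`t = true`): the composite of the unit isomorphism `I₀ ≅ I₀ ⊗ I₀` with `a ⊗ a'`. -/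
def lab (hU : (𝟙_ GraphCat) = I0) (a a' : Bool) : I0 ⟶ (I1 ⊗ I1 : GraphCat) :=
  eqToHom hU.symm ≫ (λ_ (𝟙_ GraphCat)).inv ≫
    ((eqToHom hU ≫ vert a) ⊗ₘ (eqToHom hU ≫ vert a'))

/-- The vertex of `I₁ ⊗ I₁` labelled `(a, a')`, i.e. the image of the morphism
`lab hU a a'`. -/
def vlab (hU : (𝟙_ GraphCat) = I0) (a a' : Bool) : (I1 ⊗ I1 : GraphCat).V :=
  (lab hU a a').toFun PUnit.unit

end Labels

/-- The 4-cycle `C₄`, with vertex set `Bool × Bool` and edges between pairs differing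
in exactly one coordinate; its cyclic order is `(s,s), (s,t), (t,t), (t,s)`. -/
def C4 : GraphCat where
  V := Bool × Bool
  adj p q := p ≠ q ∧ (p.1 = q.1 ∨ p.2 = q.2)
  symm := by
    rintro p q ⟨hne, h⟩
    refine ⟨hne.symm, ?_⟩
    rcases h with e | e
    exacts [Or.inl e.symm, Or.inr e.symm]
  loopless := fun p h => h.1 rfl

/-- The complete graph `K₄` on the vertex set `Bool × Bool`. -/
def K4 : GraphCat where
  V := Bool × Bool
  adj p q := p ≠ q
  symm := Ne.symm
  loopless := fun p h => h rfl

end GraphCat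

open GraphCat

section Aux

namespace GraphAux
open GraphCat CategoryTheory MonoidalCategory

theorem gcomp_toFun {X Y Z : GraphCat} (f : X ⟶ Y) (g : Y ⟶ Z) (v : X.V) :
    (f ≫ g).toFun v = g.toFun (f.toFun v) := rfl

theorem gid_toFun {X : GraphCat} (v : X.V) : (𝟙 X : X ⟶ X).toFun v = v := rfl

/-- adjacency implies distinctness -/
theorem adj_ne {X : GraphCat} {v w : X.V} (h : X.adj v w) : v ≠ w :=
  fun e => X.loopless w (e ▸ h)

def gbang (X : GraphCat) : X ⟶ I0 := ⟨fun _ => PUnit.unit, fun _ => Or.inl rfl⟩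

def vhom {X : GraphCat} (w : X.V) : I0 ⟶ X := ⟨fun _ => w, fun h => h.elim⟩

theorem vhom_inj {X : GraphCat} : Function.Injective (vhom (X := X)) := by
  intro v w h
  exact congrFun (congrArg Hom.toFun h) PUnit.unit

/-- codiscrete graph on `Bool` -/
def KB : GraphCat := ⟨Bool, Ne, Ne.symm, fun _ h => h rfl⟩

/-- transport of adjacency along an isomorphism of graphs -/
theorem iso_adj_iff {X Y : GraphCat} (e : X ≅ Y) (v w : X.V) :
    X.adj v w ↔ Y.adj (e.hom.toFun v) (e.hom.toFun w) := by
  have hinv : ∀ x, e.inv.toFun (e.hom.toFun x) = x := fun x =>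
    congrFun (congrArg Hom.toFun e.hom_inv_id) x
  constructor
  · intro h
    rcases e.hom.map_adj h with he | ha
    · exact absurd (by rw [← hinv v, ← hinv w, he]) (adj_ne h)
    · exact ha
  · intro h
    rcases e.inv.map_adj h with he | ha
    · rw [hinv, hinv] at he
      exact absurd (congrArg e.hom.toFun he) (adj_ne h)
    · rwa [hinv, hinv] at ha

section Monoidal

variable [MonoidalCategory GraphCat] (hU : (𝟙_ GraphCat) = I0)

def toUnit (X : GraphCat) : X ⟶ 𝟙_ GraphCat := gbang X ≫ eqToHom hU.symm

def pi1 : (I1 ⊗ I1 : GraphCat) ⟶ I1 := (𝟙 I1 ⊗ₘ toUnit hU I1) ≫ (ρ_ I1).hom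

def pi2 : (I1 ⊗ I1 : GraphCat) ⟶ I1 := (toUnit hU I1 ⊗ₘ 𝟙 I1) ≫ (λ_ I1).hom

theorem vert_gbang (b : Bool) : vert b ≫ gbang I1 = 𝟙 I0 := Hom.ext' rfl

theorem lab_pi1 (a a' : Bool) : lab hU a a' ≫ pi1 hU = vert a := by
  unfold lab pi1 toUnit
  try simp only [Category.assoc]
  slice_lhs 3 4 => rw [tensorHom_comp_tensorHom]
  rw [Category.comp_id, Category.assoc, ← Category.assoc (vert a'), vert_gbang,
    Category.id_comp, eqToHom_trans, eqToHom_refl, tensorHom_id]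
  try simp only [Category.assoc]
  rw [rightUnitor_naturality, ← Category.assoc ((λ_ _).inv), ← unitors_equal,
    Iso.inv_hom_id, Category.id_comp, ← Category.assoc, eqToHom_trans, eqToHom_refl,
    Category.id_comp]

theorem lab_pi2 (a a' : Bool) : lab hU a a' ≫ pi2 hU = vert a' := by
  unfold lab pi2 toUnit
  try simp only [Category.assoc]
  slice_lhs 3 4 => rw [tensorHom_comp_tensorHom]
  rw [Category.comp_id, Category.assoc, ← Category.assoc (vert a), vert_gbang,
    Category.id_comp, eqToHom_trans, eqToHom_refl, id_tensorHom]
  try simp only [Category.assoc]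
  rw [leftUnitor_naturality, ← Category.assoc ((λ_ _).inv),
    Iso.inv_hom_id, Category.id_comp, ← Category.assoc, eqToHom_trans, eqToHom_refl,
    Category.id_comp]

theorem pi1_vlab (a a' : Bool) : (pi1 hU).toFun (vlab hU a a') = a := by
  have := congrFun (congrArg Hom.toFun (lab_pi1 hU a a')) PUnit.unit
  exact this

theorem pi2_vlab (a a' : Bool) : (pi2 hU).toFun (vlab hU a a') = a' := by
  have := congrFun (congrArg Hom.toFun (lab_pi2 hU a a')) PUnit.unit
  exact this

theorem vlab_inj {a a' b b' : Bool} (h : vlab hU a a' = vlab hU b b') :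
    a = b ∧ a' = b' := by
  constructor
  · rw [← pi1_vlab hU a a', ← pi1_vlab hU b b', h]
  · rw [← pi2_vlab hU a a', ← pi2_vlab hU b b', h]

end Monoidal
end GraphAux
end Aux
section Aux2
namespace GraphAux
open GraphCat CategoryTheory MonoidalCategory

section Monoidal2
variable [MonoidalCategory GraphCat] (hU : (𝟙_ GraphCat) = I0)

/-- row inclusion `b ↦ (a, b)` -/
def jrow (a : Bool) : I1 ⟶ (I1 ⊗ I1 : GraphCat) :=
  (λ_ I1).inv ≫ ((eqToHom hU ≫ vert a) ⊗ₘ 𝟙 I1)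

/-- column inclusion `a ↦ (a, b)` -/
def jcol (b : Bool) : I1 ⟶ (I1 ⊗ I1 : GraphCat) :=
  (ρ_ I1).inv ≫ (𝟙 I1 ⊗ₘ (eqToHom hU ≫ vert b))

theorem vert_jrow (a b : Bool) : vert b ≫ jrow hU a = lab hU a b := by
  unfold jrow lab
  rw [← Category.assoc, leftUnitor_inv_naturality, Category.assoc,
    ← id_tensorHom, tensorHom_comp_tensorHom, Category.id_comp, Category.comp_id]
  have h1 : ((eqToHom hU ≫ vert a) ⊗ₘ (eqToHom hU ≫ vert b))
      = (𝟙 (𝟙_ GraphCat) ⊗ₘ eqToHom hU) ≫ ((eqToHom hU ≫ vert a) ⊗ₘ vert b) := by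
    rw [tensorHom_comp_tensorHom, Category.id_comp]
  rw [h1, id_tensorHom, ← Category.assoc ((λ_ _).inv), ← leftUnitor_inv_naturality,
    ← Category.assoc, ← Category.assoc, eqToHom_trans, eqToHom_refl, Category.id_comp]

theorem vert_jcol (a b : Bool) : vert a ≫ jcol hU b = lab hU a b := by
  unfold jcol lab
  rw [← Category.assoc, rightUnitor_inv_naturality, Category.assoc,
    ← tensorHom_id, tensorHom_comp_tensorHom, Category.id_comp, Category.comp_id]
  have h1 : ((eqToHom hU ≫ vert a) ⊗ₘ (eqToHom hU ≫ vert b))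
      = (eqToHom hU ⊗ₘ 𝟙 (𝟙_ GraphCat)) ≫ (vert a ⊗ₘ (eqToHom hU ≫ vert b)) := by
    rw [tensorHom_comp_tensorHom, Category.id_comp]
  rw [h1, tensorHom_id, ← Category.assoc ((λ_ _).inv), unitors_inv_equal,
    ← rightUnitor_inv_naturality,
    ← Category.assoc, ← Category.assoc, eqToHom_trans, eqToHom_refl, Category.id_comp]

theorem jrow_vlab (a b : Bool) : (jrow hU a).toFun b = vlab hU a b :=
  congrFun (congrArg Hom.toFun (vert_jrow hU a b)) PUnit.unit

theorem jcol_vlab (a b : Bool) : (jcol hU b).toFun a = vlab hU a b :=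
  congrFun (congrArg Hom.toFun (vert_jcol hU a b)) PUnit.unit

theorem adj_row (a b b' : Bool) (h : b ≠ b') :
    (I1 ⊗ I1 : GraphCat).adj (vlab hU a b) (vlab hU a b') := by
  have hj := (jrow hU a).map_adj (show I1.adj b b' from h)
  rw [jrow_vlab, jrow_vlab] at hj
  rcases hj with he | ha
  · exact absurd (vlab_inj hU he).2 h
  · exact ha

theorem adj_col (a a' b : Bool) (h : a ≠ a') :
    (I1 ⊗ I1 : GraphCat).adj (vlab hU a b) (vlab hU a' b) := by
  have hj := (jcol hU b).map_adj (show I1.adj a a' from h)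
  rw [jcol_vlab, jcol_vlab] at hj
  rcases hj with he | ha
  · exact absurd (vlab_inj hU he).1 h
  · exact ha

/-- the flip automorphism of `I₁` -/
def flipHom : I1 ⟶ I1 := ⟨fun b => !b, fun {v w} h => Or.inr fun e => h (Bool.not_inj e)⟩

def flipIso : I1 ≅ I1 :=
  ⟨flipHom, flipHom, Hom.ext' (funext fun b => Bool.not_not b),
    Hom.ext' (funext fun b => Bool.not_not b)⟩

def flipT : (I1 ⊗ I1 : GraphCat) ≅ (I1 ⊗ I1 : GraphCat) :=
  tensorIso flipIso (Iso.refl I1)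

theorem vert_flip (a : Bool) : vert a ≫ flipHom = vert (!a) := Hom.ext' rfl

theorem lab_flip (a b : Bool) :
    lab hU a b ≫ (flipT).hom = lab hU (!a) b := by
  show lab hU a b ≫ (flipHom ⊗ₘ 𝟙 I1) = lab hU (!a) b
  unfold lab
  try simp only [Category.assoc]
  slice_lhs 3 4 => rw [tensorHom_comp_tensorHom]
  rw [Category.comp_id, Category.assoc (eqToHom hU), vert_flip]

theorem flipT_vlab (a b : Bool) :
    (flipT).hom.toFun (vlab hU a b) = vlab hU (!a) b :=
  congrFun (congrArg Hom.toFun (lab_flip hU a b)) PUnit.unit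

theorem diag_iff :
    (I1 ⊗ I1 : GraphCat).adj (vlab hU false false) (vlab hU true true) ↔
      (I1 ⊗ I1 : GraphCat).adj (vlab hU false true) (vlab hU true false) := by
  have h := iso_adj_iff flipT (vlab hU false false) (vlab hU true true)
  rw [flipT_vlab, flipT_vlab] at h
  exact h.trans ⟨fun h' => (I1 ⊗ I1 : GraphCat).symm h',
    fun h' => (I1 ⊗ I1 : GraphCat).symm h'⟩

end Monoidal2
end GraphAux
end Aux2
section Aux3
namespace GraphAux
open GraphCat CategoryTheory MonoidalCategory MonoidalClosed

section Closed
variable [MonoidalCategory GraphCat] [MonoidalClosed GraphCat]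
variable (hU : (𝟙_ GraphCat) = I0)

/-- any function into the codiscrete graph is a graph map -/
def toKB (X : GraphCat) (g : X.V → Bool) : X ⟶ KB :=
  ⟨g, fun {v w} _ => if h : g v = g w then Or.inl h else Or.inr h⟩

def psi : I1 ⟶ (I1 ⊗ I0 : GraphCat) := (ρ_ I1).inv ≫ (𝟙 I1 ⊗ₘ eqToHom hU)

def chi : (I1 ⊗ I0 : GraphCat) ⟶ I1 := (𝟙 I1 ⊗ₘ eqToHom hU.symm) ≫ (ρ_ I1).hom

theorem chi_psi : chi hU ≫ psi hU = 𝟙 (I1 ⊗ I0 : GraphCat) := by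
  unfold chi psi
  rw [Category.assoc, ← Category.assoc ((ρ_ I1).hom), Iso.hom_inv_id, Category.id_comp,
    tensorHom_comp_tensorHom, Category.comp_id, eqToHom_trans, eqToHom_refl, id_tensorHom_id]

theorem psi_cancel {X : GraphCat} {f g : (I1 ⊗ I0 : GraphCat) ⟶ X}
    (h : psi hU ≫ f = psi hU ≫ g) : f = g := by
  have := congrArg (fun k => chi hU ≫ k) h
  simpa only [← Category.assoc, chi_psi, Category.id_comp] using this

/-- evaluation map giving an injection of the vertices of `[I₁, KB]` into `Bool → Bool` -/
noncomputable def evW (w : ((ihom I1).obj KB).V) : Bool → Bool :=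
  (psi hU ≫ uncurry (vhom w)).toFun

theorem evW_inj : Function.Injective (evW hU) := by
  intro w w' h
  have h1 : psi hU ≫ uncurry (vhom w) = psi hU ≫ uncurry (vhom w') := Hom.ext' h
  exact vhom_inj (uncurry_injective (psi_cancel hU h1))

/-- the key injection `(V(I₁ ⊗ I₁) → Bool) ↪ (Bool → Bool → Bool)` -/
noncomputable def bigJ (g : (I1 ⊗ I1 : GraphCat).V → Bool) : Bool → Bool → Bool :=
  fun b => evW hU ((curry (toKB (I1 ⊗ I1) g)).toFun b)

theorem bigJ_inj : Function.Injective (bigJ hU) := by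
  intro g g' h
  have h1 : ∀ b, (curry (toKB (I1 ⊗ I1) g)).toFun b
      = (curry (toKB (I1 ⊗ I1) g')).toFun b :=
    fun b => evW_inj hU (congrFun h b)
  have h2 : curry (toKB (I1 ⊗ I1) g) = curry (toKB (I1 ⊗ I1) g') :=
    Hom.ext' (funext h1)
  exact congrArg Hom.toFun (curry_injective h2)

theorem vlab_surj (x : (I1 ⊗ I1 : GraphCat).V) : ∃ a b, x = vlab hU a b := by
  classical
  by_contra hc
  push_neg at hc
  set m : Option (Bool × Bool) → (I1 ⊗ I1 : GraphCat).V :=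
    fun o => o.elim x (fun p => vlab hU p.1 p.2) with hm_def
  have hm : Function.Injective m := by
    rintro (_ | ⟨a, b⟩) (_ | ⟨c, d⟩) h
    · rfl
    · exact absurd h (hc _ _)
    · exact absurd h.symm (hc _ _)
    · obtain ⟨h1, h2⟩ := vlab_inj hU h
      simp only at h1 h2
      rw [h1, h2]
  have hext : Function.Injective (fun (h : Option (Bool × Bool) → Bool)
      (v : (I1 ⊗ I1 : GraphCat).V) =>
      if hv : ∃ o, m o = v then h hv.choose else false) := by
    intro h h' he
    funext o
    have h0 := congrFun he (m o)
    have hex : ∃ o', m o' = m o := ⟨o, rfl⟩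
    simp only [dif_pos hex] at h0
    rwa [hm hex.choose_spec] at h0
  have hJ := (bigJ_inj hU).comp hext
  have hcard := Fintype.card_le_of_injective _ hJ
  simp [Fintype.card_fun] at hcard
end Closed
end GraphAux
end Aux3
/-- Let `⊗` be the tensor product of a closed symmetric monoidal structure on the
category of (reflexive) graphs (whose unit is necessarily `I₀`), and write `(a,a')`
for the vertex of `I₁ ⊗ I₁` labelled `(a,a')` (with `s = false`, `t = true`).  Then
`(s,s)` is adjacent to `(t,t)` iff `(s,t)` is adjacent to `(t,s)`; consequently
`I₁ ⊗ I₁` is isomorphic either to the 4-cycle `C₄` (with the labelled vertices in the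
cyclic order `(s,s), (s,t), (t,t), (t,s)`) or to the complete graph `K₄` on the four
labelled vertices. -/
theorem tensor_I1_I1_C4_or_K4 [MonoidalCategory GraphCat] [SymmetricCategory GraphCat]
    [MonoidalClosed GraphCat] (hU : (𝟙_ GraphCat) = I0) :
    ((I1 ⊗ I1 : GraphCat).adj (vlab hU false false) (vlab hU true true) ↔
      (I1 ⊗ I1 : GraphCat).adj (vlab hU false true) (vlab hU true false)) ∧
    ((∃ e : (I1 ⊗ I1 : GraphCat) ≅ C4,
        ∀ a a' : Bool, e.hom.toFun (vlab hU a a') = (a, a')) ∨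
     (∃ e : (I1 ⊗ I1 : GraphCat) ≅ K4,
        ∀ a a' : Bool, e.hom.toFun (vlab hU a a') = (a, a'))) := by
  classical
  open GraphAux in
  have hp1 := pi1_vlab hU
  have hp2 := pi2_vlab hU
  have hsurj := GraphAux.vlab_surj hU
  have hdiag := GraphAux.diag_iff hU
  have hrow := GraphAux.adj_row hU
  have hcol := GraphAux.adj_col hU
  refine ⟨hdiag, ?_⟩
  -- the candidate vertex bijection
  have homfun : (I1 ⊗ I1 : GraphCat).V → Bool × Bool :=
    fun x => ((GraphAux.pi1 hU).toFun x, (GraphAux.pi2 hU).toFun x)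
  by_cases hd : (I1 ⊗ I1 : GraphCat).adj (vlab hU false false) (vlab hU true true)
  · -- complete graph case
    right
    have hd' : (I1 ⊗ I1 : GraphCat).adj (vlab hU true true) (vlab hU false false) :=
      (I1 ⊗ I1 : GraphCat).symm hd
    have hd2 := hdiag.mp hd
    have hd2' : (I1 ⊗ I1 : GraphCat).adj (vlab hU true false) (vlab hU false true) :=
      (I1 ⊗ I1 : GraphCat).symm hd2
    refine ⟨⟨⟨fun x => ((GraphAux.pi1 hU).toFun x, (GraphAux.pi2 hU).toFun x), ?_⟩,
      ⟨fun p => vlab hU p.1 p.2, ?_⟩, ?_, ?_⟩, fun a a' => by simp [hp1, hp2]; rfl⟩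
    · intro v w hvw
      refine Or.inr ?_
      obtain ⟨a, b, rfl⟩ := hsurj v
      obtain ⟨c, d, rfl⟩ := hsurj w
      simp only [hp1, hp2]
      intro he
      exact GraphAux.adj_ne hvw
        (by rw [show a = c from congrArg Prod.fst he, show b = d from congrArg Prod.snd he])
    · rintro ⟨a, b⟩ ⟨c, d⟩ hpq
      refine Or.inr ?_
      have hne : (a, b) ≠ (c, d) := hpq
      cases a <;> cases b <;> cases c <;> cases d <;>
          first
            | exact absurd rfl hne
            | exact hrow _ _ _ (by decide)
            | exact hcol _ _ _ (by decide)
            | exact hd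
            | exact hd'
            | exact hd2
            | exact hd2'
    · refine Hom.ext' (funext fun x => ?_)
      obtain ⟨a, b, rfl⟩ := hsurj x
      show vlab hU ((GraphAux.pi1 hU).toFun (vlab hU a b))
        ((GraphAux.pi2 hU).toFun (vlab hU a b)) = vlab hU a b
      rw [hp1, hp2]
    · refine Hom.ext' (funext fun p => ?_)
      show ((GraphAux.pi1 hU).toFun (vlab hU p.1 p.2),
        (GraphAux.pi2 hU).toFun (vlab hU p.1 p.2)) = p
      rw [hp1, hp2]
      rfl
  · -- 4-cycle case
    left
    have hnd' : ¬ (I1 ⊗ I1 : GraphCat).adj (vlab hU true true) (vlab hU false false) :=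
      fun h => hd ((I1 ⊗ I1 : GraphCat).symm h)
    have hnd2 : ¬ (I1 ⊗ I1 : GraphCat).adj (vlab hU false true) (vlab hU true false) :=
      fun h => hd (hdiag.mpr h)
    have hnd2' : ¬ (I1 ⊗ I1 : GraphCat).adj (vlab hU true false) (vlab hU false true) :=
      fun h => hnd2 ((I1 ⊗ I1 : GraphCat).symm h)
    refine ⟨⟨⟨fun x => ((GraphAux.pi1 hU).toFun x, (GraphAux.pi2 hU).toFun x), ?_⟩,
      ⟨fun p => vlab hU p.1 p.2, ?_⟩, ?_, ?_⟩, fun a a' => by simp [hp1, hp2]; rfl⟩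
    · intro v w hvw
      refine Or.inr ?_
      obtain ⟨a, b, rfl⟩ := hsurj v
      obtain ⟨c, d, rfl⟩ := hsurj w
      simp only [hp1, hp2]
      constructor
      · intro he
        exact GraphAux.adj_ne hvw
          (by rw [show a = c from congrArg Prod.fst he, show b = d from congrArg Prod.snd he])
      · show a = c ∨ b = d
        by_contra hcon
        push_neg at hcon
        obtain ⟨h1, h2⟩ := hcon
        cases a <;> cases b <;> cases c <;> cases d <;>
            first
              | exact absurd rfl h1
              | exact absurd rfl h2
              | exact absurd hvw hd
              | exact absurd hvw hnd'
              | exact absurd hvw hnd2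
              | exact absurd hvw hnd2'
    · rintro ⟨a, b⟩ ⟨c, d⟩ ⟨hne, hor⟩
      refine Or.inr ?_
      dsimp only at hor
      rcases hor with h | h
      · obtain rfl : a = c := h
        exact hrow _ _ _ (fun e => hne (by cases (show b = d from e); rfl))
      · obtain rfl : b = d := h
        exact hcol _ _ _ (fun e => hne (by cases (show a = c from e); rfl))
    · refine Hom.ext' (funext fun x => ?_)
      obtain ⟨a, b, rfl⟩ := hsurj x
      show vlab hU ((GraphAux.pi1 hU).toFun (vlab hU a b))
        ((GraphAux.pi2 hU).toFun (vlab hU a b)) = vlab hU a b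
      rw [hp1, hp2]
    · refine Hom.ext' (funext fun p => ?_)
      show ((GraphAux.pi1 hU).toFun (vlab hU p.1 p.2),
        (GraphAux.pi2 hU).toFun (vlab hU p.1 p.2)) = p
      rw [hp1, hp2]
      rfl
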